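/- Let 𝒢 ∈ CC₁ with consecutive clique enumeration 𝒞₁,...,𝒞ₙ, let all vertex groups Γ_v be infinite, and let Γ = 𝒢{Γ_v}. Suppose g ∈ Γ_{𝒞_{i-1} Δ 𝒞ᵢ} and h ∈ Γ_{𝒞ᵢ Δ 𝒞_{i+1}} satisfy gh ∈ Γ_{𝒱 ∖ 𝒞ᵢ^int}. Then there exist a ∈ Γ_{(𝒞_{i-1}∖𝒞_{i-1,i}) ∪ 𝒞_{i,i+1}}, s ∈ Γ_{𝒞ᵢ^int}, and b ∈ Γ_{(𝒞_{i+1}∖𝒞_{i,i+1}) ∪ 𝒞_{i-1,i}} such that g = as and h = s⁻¹b. -/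

import Mathlib

open Monoid

variable {V : Type*}

/-- Defining relators of a graph product: commutators of elements of adjacent vertex groups. -/
def graphProdRels (G : SimpleGraph V) (Γ : V → Type*) [∀ v, Group (Γ v)] :
    Set (Monoid.CoprodI Γ) :=
  {x | ∃ (u w : V) (a : Γ u) (b : Γ w), G.Adj u w ∧
      x = CoprodI.of a * CoprodI.of b * (CoprodI.of a)⁻¹ * (CoprodI.of b)⁻¹}

/-- The graph product of the family of groups `Γ` over the simple graph `G`. -/
def GraphProduct (G : SimpleGraph V) (Γ : V → Type*) [∀ v, Group (Γ v)] : Type _ :=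
  CoprodI Γ ⧸ Subgroup.normalClosure (graphProdRels G Γ)

instance (G : SimpleGraph V) (Γ : V → Type*) [∀ v, Group (Γ v)] :
    Group (GraphProduct G Γ) :=
  inferInstanceAs (Group (CoprodI Γ ⧸ Subgroup.normalClosure (graphProdRels G Γ)))

/-- The canonical map from a vertex group into the graph product. -/
def GraphProduct.of {G : SimpleGraph V} {Γ : V → Type*} [∀ v, Group (Γ v)] (v : V) :
    Γ v →* GraphProduct G Γ :=
  (QuotientGroup.mk' (Subgroup.normalClosure (graphProdRels G Γ))).comp CoprodI.of

/-- The full subgroup of a graph product associated with a set of vertices. -/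
def GraphProduct.full (G : SimpleGraph V) (Γ : V → Type*) [∀ v, Group (Γ v)]
    (U : Set V) : Subgroup (GraphProduct G Γ) :=
  Subgroup.closure (⋃ u ∈ U, Set.range (GraphProduct.of (G := G) (Γ := Γ) u))

/-- The conjugate subgroup `g H g⁻¹`. -/
def conjSub {G : Type*} [Group G] (g : G) (H : Subgroup G) : Subgroup G :=
  Subgroup.map (MulAut.conj g).toMonoidHom H

/-- The common link of a set of vertices. -/
def lkSet (G : SimpleGraph V) (S : Set V) : Set V :=
  ⋂ u ∈ S, G.neighborSet u

/-- A consecutive enumeration of the cliques of a graph in class `CC₁`: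
the cliques are `C 1, ..., C n` (indexed by `ZMod n`, `n ≥ 4`), consecutive cliques
intersect nontrivially, non-consecutive ones are disjoint, and each clique has a
nonempty interior `C i \ (C (i-1) ∪ C (i+1))`. -/
structure ConsecutiveCliques {V : Type*} (G : SimpleGraph V) (n : ℕ) where
  C : ZMod n → Set V
  four_le : 4 ≤ n
  isClique : ∀ i, G.IsClique (C i)
  isMaximal : ∀ i, ∀ s : Set V, G.IsClique s → C i ⊆ s → s = C i
  cliques_covered : ∀ s : Set V, G.IsClique s →
    (∀ t : Set V, G.IsClique t → s ⊆ t → t = s) → ∃ i, s = C i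
  inj : Function.Injective C
  inter_empty : ∀ i j : ZMod n, i ≠ j → i ≠ j + 1 → j ≠ i + 1 → C i ∩ C j = ∅
  inter_nonempty : ∀ i, (C i ∩ C (i + 1)).Nonempty
  int_nonempty : ∀ i, (C i \ (C (i - 1) ∪ C (i + 1))).Nonempty

-- auxiliary section
section Aux
variable (G : SimpleGraph V) (Γ : V → Type*) [∀ v, Group (Γ v)]

open Classical in
/-- Retraction killing generators outside `W`. -/
noncomputable def killHom (W : Set V) : GraphProduct G Γ →* GraphProduct G Γ :=
  QuotientGroup.lift _
    (CoprodI.lift fun v => if v ∈ W then GraphProduct.of (G := G) (Γ := Γ) v else 1)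
    (by
      intro x hx
      refine Subgroup.normalClosure_le_normal ?_ hx
      rintro y ⟨u, w, a, b, hadj, rfl⟩
      simp only [SetLike.mem_coe, MonoidHom.mem_ker, map_mul, map_inv, CoprodI.lift_of]
      by_cases hu : u ∈ W <;> by_cases hw : w ∈ W <;> simp [hu, hw]
      · have heq : GraphProduct.of (G := G) (Γ := Γ) u a * GraphProduct.of w b *
            (GraphProduct.of u a)⁻¹ * (GraphProduct.of w b)⁻¹ =
            QuotientGroup.mk' (Subgroup.normalClosure (graphProdRels G Γ))
              (CoprodI.of a * CoprodI.of b * (CoprodI.of a)⁻¹ * (CoprodI.of b)⁻¹) := by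
          rfl
        refine heq.trans ?_
        exact (QuotientGroup.eq_one_iff _).mpr (Subgroup.subset_normalClosure ⟨u, w, a, b, hadj, rfl⟩))

variable {G Γ}

lemma killHom_of_mem {W : Set V} {v : V} (hv : v ∈ W) (a : Γ v) :
    killHom G Γ W (GraphProduct.of v a) = GraphProduct.of v a := by
  classical
  show QuotientGroup.lift _ _ _ (QuotientGroup.mk (CoprodI.of a)) = _
  rw [QuotientGroup.lift_mk, CoprodI.lift_of]
  simp [hv]

lemma killHom_of_not_mem {W : Set V} {v : V} (hv : v ∉ W) (a : Γ v) :
    killHom G Γ W (GraphProduct.of v a) = 1 := by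
  classical
  show QuotientGroup.lift _ _ _ (QuotientGroup.mk (CoprodI.of a)) = _
  rw [QuotientGroup.lift_mk, CoprodI.lift_of]
  simp [hv]

lemma full_mono {U U' : Set V} (h : U ⊆ U') :
    GraphProduct.full G Γ U ≤ GraphProduct.full G Γ U' :=
  Subgroup.closure_mono (Set.biUnion_subset_biUnion_left h)

lemma killHom_mem_full {U W : Set V} {x : GraphProduct G Γ}
    (hx : x ∈ GraphProduct.full G Γ U) :
    killHom G Γ W x ∈ GraphProduct.full G Γ (U ∩ W) := by
  induction hx using Subgroup.closure_induction with
  | mem y hy =>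
    obtain ⟨_, ⟨u, rfl⟩, hy⟩ := hy
    obtain ⟨_, ⟨hu, rfl⟩, a, rfl⟩ := hy
    by_cases hw : u ∈ W
    · rw [killHom_of_mem hw]
      exact Subgroup.subset_closure (Set.mem_biUnion ⟨hu, hw⟩ ⟨a, rfl⟩)
    · rw [killHom_of_not_mem hw]; exact one_mem _
  | one => rw [map_one]; exact one_mem _
  | mul y z hy hz ihy ihz => rw [map_mul]; exact mul_mem ihy ihz
  | inv y hy ihy => rw [map_inv]; exact inv_mem ihy

lemma killHom_fix {W : Set V} {x : GraphProduct G Γ}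
    (hx : x ∈ GraphProduct.full G Γ W) : killHom G Γ W x = x := by
  induction hx using Subgroup.closure_induction with
  | mem y hy =>
    obtain ⟨_, ⟨u, rfl⟩, hy⟩ := hy
    obtain ⟨_, ⟨hu, rfl⟩, a, rfl⟩ := hy
    exact killHom_of_mem hu a
  | one => simp
  | mul y z hy hz ihy ihz => rw [map_mul, ihy, ihz]
  | inv y hy ihy => rw [map_inv, ihy]

end Aux

/-- Cancellation: if `g ∈ Γ_{𝒞_{i-1} Δ 𝒞ᵢ}`, `h ∈ Γ_{𝒞ᵢ Δ 𝒞_{i+1}}` and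
`g h ∈ Γ_{𝒱 ∖ 𝒞ᵢ^int}`, then `g = a s` and `h = s⁻¹ b` with
`a ∈ Γ_{(𝒞_{i-1}∖𝒞_{i-1,i}) ∪ 𝒞_{i,i+1}}`, `s ∈ Γ_{𝒞ᵢ^int}`,
`b ∈ Γ_{(𝒞_{i+1}∖𝒞_{i,i+1}) ∪ 𝒞_{i-1,i}}`. -/

theorem stmt_8 {V : Type*} [Fintype V] (G : SimpleGraph V) (Γ : V → Type*)
    [∀ v, Group (Γ v)] [∀ v, Infinite (Γ v)] {n : ℕ} (cc : ConsecutiveCliques G n)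
    (i : ZMod n) (g h : GraphProduct G Γ)
    (hg : g ∈ GraphProduct.full G Γ
      ((cc.C (i - 1) ∪ cc.C i) \ (cc.C (i - 1) ∩ cc.C i)))
    (hh : h ∈ GraphProduct.full G Γ
      ((cc.C i ∪ cc.C (i + 1)) \ (cc.C i ∩ cc.C (i + 1))))
    (hgh : g * h ∈ GraphProduct.full G Γ
      ((cc.C i \ (cc.C (i - 1) ∪ cc.C (i + 1)))ᶜ)) :
    ∃ a ∈ GraphProduct.full G Γ
        ((cc.C (i - 1) \ (cc.C (i - 1) ∩ cc.C i)) ∪ (cc.C i ∩ cc.C (i + 1))),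
      ∃ s ∈ GraphProduct.full G Γ (cc.C i \ (cc.C (i - 1) ∪ cc.C (i + 1))),
        ∃ b ∈ GraphProduct.full G Γ
          ((cc.C (i + 1) \ (cc.C i ∩ cc.C (i + 1))) ∪ (cc.C (i - 1) ∩ cc.C i)),
          g = a * s ∧ h = s⁻¹ * b := by
  -- notation
  set S : Set V := cc.C i \ (cc.C (i - 1) ∪ cc.C (i + 1)) with hS
  set A : Set V := (cc.C (i - 1) ∪ cc.C i) \ (cc.C (i - 1) ∩ cc.C i) with hA
  set B : Set V := (cc.C i ∪ cc.C (i + 1)) \ (cc.C i ∩ cc.C (i + 1)) with hB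
  -- disjointness of C (i-1) and C (i+1)
  haveI : NeZero n := ⟨by have := cc.four_le; omega⟩
  have hnd : ∀ k : ℕ, 0 < k → k < 4 → ((k : ZMod n) ≠ 0) := by
    intro k hk1 hk2 hk0
    rw [ZMod.natCast_eq_zero_iff] at hk0
    have := Nat.le_of_dvd hk1 hk0
    have := cc.four_le
    omega
  have hdisj : cc.C (i - 1) ∩ cc.C (i + 1) = ∅ := by
    apply cc.inter_empty
    · intro hq
      have : ((2 : ℕ) : ZMod n) = 0 := by push_cast; linear_combination -hq
      exact hnd 2 (by norm_num) (by norm_num) this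
    · intro hq
      have : ((3 : ℕ) : ZMod n) = 0 := by push_cast; linear_combination -hq
      exact hnd 3 (by norm_num) (by norm_num) this
    · intro hq
      have : ((1 : ℕ) : ZMod n) = 0 := by push_cast; linear_combination hq
      exact hnd 1 (by norm_num) (by norm_num) this
  -- set inclusions
  have hAS : A ∩ Sᶜ ⊆ (cc.C (i - 1) \ (cc.C (i - 1) ∩ cc.C i)) ∪ (cc.C i ∩ cc.C (i + 1)) := by
    rintro x ⟨⟨hx1, hx2⟩, hx3⟩
    simp only [Set.mem_compl_iff, hS, Set.mem_diff, Set.mem_union, not_and, not_not] at hx3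
    rcases hx1 with hm | hm
    · exact Or.inl ⟨hm, hx2⟩
    · rcases hx3 hm with hc | hc
      · exact absurd ⟨hc, hm⟩ hx2
      · exact Or.inr ⟨hm, hc⟩
  have hBS : B ∩ Sᶜ ⊆ (cc.C (i + 1) \ (cc.C i ∩ cc.C (i + 1))) ∪ (cc.C (i - 1) ∩ cc.C i) := by
    rintro x ⟨⟨hx1, hx2⟩, hx3⟩
    simp only [Set.mem_compl_iff, hS, Set.mem_diff, Set.mem_union, not_and, not_not] at hx3
    rcases hx1 with hm | hm
    · rcases hx3 hm with hc | hc
      · exact Or.inr ⟨hc, hm⟩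
      · exact absurd ⟨hm, hc⟩ hx2
    · exact Or.inl ⟨hm, hx2⟩
  have hABS : A ∩ B ⊆ S := by
    rintro x ⟨⟨hx1, hx2⟩, hx3, hx4⟩
    by_cases hxi : x ∈ cc.C i
    · refine ⟨hxi, ?_⟩
      rintro (hc | hc)
      · exact hx2 ⟨hc, hxi⟩
      · exact hx4 ⟨hxi, hc⟩
    · have h1 : x ∈ cc.C (i - 1) := hx1.resolve_right hxi
      have h2 : x ∈ cc.C (i + 1) := hx3.resolve_left hxi
      have : x ∈ cc.C (i - 1) ∩ cc.C (i + 1) := ⟨h1, h2⟩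
      rw [hdisj] at this
      exact this.elim
  -- retraction onto the complement of the interior
  set ρ := killHom G Γ Sᶜ with hρ
  have hfix : ρ (g * h) = g * h := killHom_fix hgh
  have hρg : ρ g ∈ GraphProduct.full G Γ (A ∩ Sᶜ) := killHom_mem_full hg
  have hρh : ρ h ∈ GraphProduct.full G Γ (B ∩ Sᶜ) := killHom_mem_full hh
  set t : GraphProduct G Γ := (ρ g)⁻¹ * g with ht
  have htB' : ρ h * h⁻¹ = t := by
    have hmul : ρ g * ρ h = g * h := by rw [← map_mul]; exact hfix
    have hh' : ρ h = (ρ g)⁻¹ * (g * h) := by rw [← hmul]; group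
    rw [hh', ht]; group
  have htA : t ∈ GraphProduct.full G Γ A := by
    refine mul_mem (inv_mem ?_) hg
    exact full_mono Set.inter_subset_left hρg
  have htB : t ∈ GraphProduct.full G Γ B := by
    rw [← htB']
    exact mul_mem (full_mono Set.inter_subset_left hρh) (inv_mem hh)
  have hts : t ∈ GraphProduct.full G Γ S := by
    have h1 : killHom G Γ B t = t := killHom_fix htB
    have h2 : killHom G Γ B t ∈ GraphProduct.full G Γ (A ∩ B) := killHom_mem_full htA
    rw [h1] at h2
    exact full_mono hABS h2
  refine ⟨ρ g, full_mono hAS hρg, t, hts, ρ h, full_mono hBS hρh, ?_, ?_⟩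
  · rw [ht]; group
  · rw [← htB']; group
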